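/- Let n ≥ 2, let U ⊆ ℝ^{2n} be open with coordinates (x, y) ∈ ℝ^n × ℝ^n, and let ρ : U → ℂ be twice continuously differentiable. Define q_j = ∂_{x_j}ρ + i ∂_{y_j}ρ for 1 ≤ j ≤ n, and assume q_n(x,y) ≠ 0 for all (x,y) ∈ U. On the phase space U × ℝ^{2n} with cotangent coordinates (ξ, η) ∈ ℝ^n × ℝ^n, define for 1 ≤ j ≤ n−1 the functions p_j(x,y,ξ,η) = (ξ_j + i η_j) − (q_j(x,y)/q_n(x,y)) · (ξ_n + i η_n), and define the Poisson bracket {f, g} = Σ_{j=1}^{n} (∂_{ξ_j} f · ∂_{x_j} g − ∂_{x_j} f · ∂_{ξ_j} g) + Σ_{j=1}^{n} (∂_{η_j} f · ∂_{y_j} g − ∂_{y_j} f · ∂_{η_j} g). Then {p_j, p_k} = 0 identically on U × ℝ^{2n} for all 1 ≤ j, k ≤ n−1. -/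

import Mathlib

/-- Directional derivative of a complex-valued function in the direction `v`. -/
noncomputable def dd {E : Type*} [NormedAddCommGroup E] [NormedSpace ℝ E]
    (v : E) (f : E → ℂ) (p : E) : ℂ :=
  fderiv ℝ f p v

/-- The phase space `U × ℝ^{2n}` with coordinates `((x, y), (ξ, η))`. -/
abbrev Phase (n : ℕ) :=
  ((Fin n → ℝ) × (Fin n → ℝ)) × ((Fin n → ℝ) × (Fin n → ℝ))

lemma dd_def {E : Type*} [NormedAddCommGroup E] [NormedSpace ℝ E]
    (v : E) (f : E → ℂ) (p : E) : dd v f p = fderiv ℝ f p v := rfl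

noncomputable def zeta {n : ℕ} (l : Fin n) : ((Fin n → ℝ) × (Fin n → ℝ)) →L[ℝ] ℂ :=
  Complex.ofRealCLM.comp ((ContinuousLinearMap.proj l).comp
      (ContinuousLinearMap.fst ℝ (Fin n → ℝ) (Fin n → ℝ))) +
  Complex.I • Complex.ofRealCLM.comp ((ContinuousLinearMap.proj l).comp
      (ContinuousLinearMap.snd ℝ (Fin n → ℝ) (Fin n → ℝ)))

lemma zeta_apply {n : ℕ} (l : Fin n) (v : (Fin n → ℝ) × (Fin n → ℝ)) :
    zeta l v = v.1 l + Complex.I * v.2 l := by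
  simp [zeta, smul_eq_mul]

lemma sum_delta {n : ℕ} (j : Fin n) (X : Fin n → ℂ) :
    ∑ m : Fin n, (((Pi.single m 1 : Fin n → ℝ) j) : ℂ) * X m = X j := by
  rw [Finset.sum_eq_single j]
  · simp
  · intro m _ hmj
    rw [Pi.single_eq_of_ne (Ne.symm hmj)]
    simp
  · simp

lemma sum_three {n : ℕ} (j k N : Fin n) (C1 C2 C3 : Fin n → ℂ) (F : Fin n → ℂ)
    (hF : ∀ m, F m = (((Pi.single m 1 : Fin n → ℝ) j) : ℂ) * C1 m
        + (((Pi.single m 1 : Fin n → ℝ) N) : ℂ) * C2 m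
        + (((Pi.single m 1 : Fin n → ℝ) k) : ℂ) * C3 m) :
    ∑ m : Fin n, F m = C1 j + C2 N + C3 k := by
  rw [Finset.sum_congr rfl fun m _ => hF m, Finset.sum_add_distrib, Finset.sum_add_distrib,
    sum_delta, sum_delta, sum_delta]

set_option maxHeartbeats 1600000 in
theorem stmt_18 (n : ℕ) (hn : 2 ≤ n)
    (U : Set ((Fin n → ℝ) × (Fin n → ℝ))) (hU : IsOpen U)
    (ρ : (Fin n → ℝ) × (Fin n → ℝ) → ℂ) (hρ : ContDiffOn ℝ 2 ρ U)
    (q : Fin n → ((Fin n → ℝ) × (Fin n → ℝ)) → ℂ)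
    (hq : ∀ j w, q j w = dd (Pi.single j 1, 0) ρ w + Complex.I * dd (0, Pi.single j 1) ρ w)
    (hqn : ∀ w ∈ U, q ⟨n - 1, by omega⟩ w ≠ 0)
    (p : Fin n → Phase n → ℂ)
    (hp : ∀ j w, p j w = (w.2.1 j + Complex.I * w.2.2 j)
        - (q j w.1 / q ⟨n - 1, by omega⟩ w.1)
          * (w.2.1 ⟨n - 1, by omega⟩ + Complex.I * w.2.2 ⟨n - 1, by omega⟩))
    (pb : (Phase n → ℂ) → (Phase n → ℂ) → Phase n → ℂ)
    (hpb : ∀ (f g : Phase n → ℂ) (w : Phase n), pb f g w =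
      (∑ j : Fin n,
        (dd ((0, 0), (Pi.single j 1, 0)) f w * dd ((Pi.single j 1, 0), (0, 0)) g w
          - dd ((Pi.single j 1, 0), (0, 0)) f w * dd ((0, 0), (Pi.single j 1, 0)) g w))
      + ∑ j : Fin n,
        (dd ((0, 0), (0, Pi.single j 1)) f w * dd ((0, Pi.single j 1), (0, 0)) g w
          - dd ((0, Pi.single j 1), (0, 0)) f w * dd ((0, 0), (0, Pi.single j 1)) g w)) :
    ∀ j k : Fin n, (j : ℕ) < n - 1 → (k : ℕ) < n - 1 →
      ∀ w : Phase n, w.1 ∈ U → pb (p j) (p k) w = 0 := by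
  intro j k hj hk w hw
  have hN : n - 1 < n := by omega
  set N : Fin n := ⟨n - 1, hN⟩ with hNdef
  have hqNz : q N w.1 ≠ 0 := hqn w.1 hw
  set H := fderiv ℝ (fderiv ℝ ρ) w.1 with hHdef
  have hev : ∀ᶠ y in nhds w.1, HasFDerivAt ρ (fderiv ℝ ρ y) y := by
    filter_upwards [hU.mem_nhds hw] with y hy using
      ((hρ.contDiffAt (hU.mem_nhds hy)).differentiableAt (by norm_num)).hasFDerivAt
  have hH : HasFDerivAt (fderiv ℝ ρ) H w.1 :=
    (((hρ.contDiffAt (hU.mem_nhds hw)).fderiv_right (m := 1)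
        (by norm_num)).differentiableAt (by norm_num)).hasFDerivAt
  have hsymm : ∀ u v, H u v = H v u := fun u v =>
    second_derivative_symmetric_of_eventually hev hH u v
  -- derivative of q l
  have hqd : ∀ l : Fin n, HasFDerivAt (q l)
      ((ContinuousLinearMap.apply ℝ ℂ ((Pi.single l 1, 0) : (Fin n → ℝ) × (Fin n → ℝ))).comp H
        + Complex.I • (ContinuousLinearMap.apply ℝ ℂ
            ((0, Pi.single l 1) : (Fin n → ℝ) × (Fin n → ℝ))).comp H) w.1 := by
    intro l
    have hfun : q l = fun y => fderiv ℝ ρ y (Pi.single l 1, 0)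
        + Complex.I * fderiv ℝ ρ y (0, Pi.single l 1) :=
      funext fun y => by rw [hq l y]; rfl
    rw [hfun]
    have h1 : HasFDerivAt (fun y => fderiv ℝ ρ y
          ((Pi.single l 1, 0) : (Fin n → ℝ) × (Fin n → ℝ)))
        ((ContinuousLinearMap.apply ℝ ℂ
          ((Pi.single l 1, 0) : (Fin n → ℝ) × (Fin n → ℝ))).comp H) w.1 :=
      (ContinuousLinearMap.apply ℝ ℂ
        ((Pi.single l 1, 0) : (Fin n → ℝ) × (Fin n → ℝ))).hasFDerivAt.comp w.1 hH
    have h2 : HasFDerivAt (fun y => fderiv ℝ ρ y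
          ((0, Pi.single l 1) : (Fin n → ℝ) × (Fin n → ℝ)))
        ((ContinuousLinearMap.apply ℝ ℂ
          ((0, Pi.single l 1) : (Fin n → ℝ) × (Fin n → ℝ))).comp H) w.1 :=
      (ContinuousLinearMap.apply ℝ ℂ
        ((0, Pi.single l 1) : (Fin n → ℝ) × (Fin n → ℝ))).hasFDerivAt.comp w.1 hH
    exact h1.add (h2.const_mul Complex.I)
  -- value of the derivative of the quotient
  set Bv : Fin n → ((Fin n → ℝ) × (Fin n → ℝ)) → ℂ := fun l u =>
    (q N w.1)⁻¹ * (H u (Pi.single l 1, 0) + Complex.I * H u (0, Pi.single l 1))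
      - q l w.1 * ((q N w.1) ^ 2)⁻¹
        * (H u (Pi.single N 1, 0) + Complex.I * H u (0, Pi.single N 1)) with hBvdef
  have hBv0 : ∀ l : Fin n, Bv l ((0 : Fin n → ℝ), (0 : Fin n → ℝ)) = 0 := by
    intro l
    simp [hBvdef, Prod.mk_zero_zero]
  -- derivative of the quotient q l / q N
  have key : ∀ l : Fin n, ∃ B : ((Fin n → ℝ) × (Fin n → ℝ)) →L[ℝ] ℂ,
      HasFDerivAt (fun y => q l y / q N y) B w.1 ∧ ∀ v, B v = Bv l v := by
    intro l
    have hinv : HasFDerivAt (fun y => (q N y)⁻¹)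
        ((-(q N w.1 ^ 2)⁻¹) • ((ContinuousLinearMap.apply ℝ ℂ
            ((Pi.single N 1, 0) : (Fin n → ℝ) × (Fin n → ℝ))).comp H
          + Complex.I • (ContinuousLinearMap.apply ℝ ℂ
            ((0, Pi.single N 1) : (Fin n → ℝ) × (Fin n → ℝ))).comp H)) w.1 := by
      exact (hasDerivAt_inv hqNz).comp_hasFDerivAt w.1 (hqd N)
    have hb := (hqd l).mul hinv
    refine ⟨_, by
      rw [show (fun y => q l y / q N y) = fun y => q l y * (q N y)⁻¹ from
        funext fun y => div_eq_mul_inv _ _]; exact hb, fun v => ?_⟩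
    simp only [hBvdef, ContinuousLinearMap.add_apply, ContinuousLinearMap.coe_comp',
      Function.comp_apply, ContinuousLinearMap.smul_apply, ContinuousLinearMap.apply_apply,
      smul_eq_mul]
    ring
  -- derivative of p l
  have keyp : ∀ l : Fin n, ∃ P : Phase n →L[ℝ] ℂ,
      HasFDerivAt (p l) P w ∧ ∀ v : Phase n,
        P v = ((v.2.1 l : ℂ) + Complex.I * v.2.2 l)
          - ((q l w.1 / q N w.1) * ((v.2.1 N : ℂ) + Complex.I * v.2.2 N)
            + ((w.2.1 N : ℂ) + Complex.I * w.2.2 N) * Bv l v.1) := by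
    intro l
    obtain ⟨B, hB, hBval⟩ := key l
    have hpfun : p l = fun w' : Phase n =>
        zeta l w'.2 - (q l w'.1 / q N w'.1) * zeta N w'.2 :=
      funext fun w' => by rw [hp l w', zeta_apply, zeta_apply]
    have h1p : HasFDerivAt (fun w' : Phase n => zeta l w'.2)
        ((zeta l).comp (ContinuousLinearMap.snd ℝ _ _)) w := by
      exact (zeta l).hasFDerivAt.comp w hasFDerivAt_snd
    have h3p : HasFDerivAt (fun w' : Phase n => zeta N w'.2)
        ((zeta N).comp (ContinuousLinearMap.snd ℝ _ _)) w := by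
      exact (zeta N).hasFDerivAt.comp w hasFDerivAt_snd
    have h2p : HasFDerivAt (fun w' : Phase n => q l w'.1 / q N w'.1)
        (B.comp (ContinuousLinearMap.fst ℝ _ _)) w := by
      exact hB.comp w hasFDerivAt_fst
    have hP := h1p.sub (h2p.mul h3p)
    refine ⟨_, by rw [hpfun]; exact hP, fun v => ?_⟩
    simp only [ContinuousLinearMap.sub_apply, ContinuousLinearMap.add_apply,
      ContinuousLinearMap.smul_apply, ContinuousLinearMap.coe_comp', Function.comp_apply,
      ContinuousLinearMap.coe_fst', ContinuousLinearMap.coe_snd', smul_eq_mul,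
      zeta_apply, hBval]
  obtain ⟨Pj, hPj, hPjv⟩ := keyp j
  obtain ⟨Pk, hPk, hPkv⟩ := keyp k
  have ddj : ∀ v, dd v (p j) w = Pj v := fun v => by rw [dd_def, hPj.fderiv]
  have ddk : ∀ v, dd v (p k) w = Pk v := fun v => by rw [dd_def, hPk.fderiv]
  rw [hpb]
  have e1 : (∑ m : Fin n,
        (dd ((0, 0), (Pi.single m 1, 0)) (p j) w * dd ((Pi.single m 1, 0), (0, 0)) (p k) w
          - dd ((Pi.single m 1, 0), (0, 0)) (p j) w * dd ((0, 0), (Pi.single m 1, 0)) (p k) w))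
      = -(((w.2.1 N : ℂ) + Complex.I * w.2.2 N) * Bv k (Pi.single j 1, 0))
        + ((q j w.1 / q N w.1) * (((w.2.1 N : ℂ) + Complex.I * w.2.2 N) * Bv k (Pi.single N 1, 0))
          - (q k w.1 / q N w.1) * (((w.2.1 N : ℂ) + Complex.I * w.2.2 N) * Bv j (Pi.single N 1, 0)))
        + ((w.2.1 N : ℂ) + Complex.I * w.2.2 N) * Bv j (Pi.single k 1, 0) := by
    refine sum_three j k N
      (fun m => -(((w.2.1 N : ℂ) + Complex.I * w.2.2 N) * Bv k (Pi.single m 1, 0)))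
      (fun m => (q j w.1 / q N w.1) * (((w.2.1 N : ℂ) + Complex.I * w.2.2 N) * Bv k (Pi.single m 1, 0))
          - (q k w.1 / q N w.1) * (((w.2.1 N : ℂ) + Complex.I * w.2.2 N) * Bv j (Pi.single m 1, 0)))
      (fun m => ((w.2.1 N : ℂ) + Complex.I * w.2.2 N) * Bv j (Pi.single m 1, 0)) _ (fun m => ?_)
    rw [ddj, ddj, ddk, ddk, hPjv, hPjv, hPkv, hPkv]
    simp only [hBv0, Pi.zero_apply, Complex.ofReal_zero, mul_zero, add_zero, zero_add]
    ring
  have e2 : (∑ m : Fin n,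
        (dd ((0, 0), (0, Pi.single m 1)) (p j) w * dd ((0, Pi.single m 1), (0, 0)) (p k) w
          - dd ((0, Pi.single m 1), (0, 0)) (p j) w * dd ((0, 0), (0, Pi.single m 1)) (p k) w))
      = -(Complex.I * (((w.2.1 N : ℂ) + Complex.I * w.2.2 N) * Bv k (0, Pi.single j 1)))
        + ((q j w.1 / q N w.1) * (Complex.I * (((w.2.1 N : ℂ) + Complex.I * w.2.2 N) * Bv k (0, Pi.single N 1)))
          - (q k w.1 / q N w.1) * (Complex.I * (((w.2.1 N : ℂ) + Complex.I * w.2.2 N) * Bv j (0, Pi.single N 1))))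
        + Complex.I * (((w.2.1 N : ℂ) + Complex.I * w.2.2 N) * Bv j (0, Pi.single k 1)) := by
    refine sum_three j k N
      (fun m => -(Complex.I * (((w.2.1 N : ℂ) + Complex.I * w.2.2 N) * Bv k (0, Pi.single m 1))))
      (fun m => (q j w.1 / q N w.1) * (Complex.I * (((w.2.1 N : ℂ) + Complex.I * w.2.2 N) * Bv k (0, Pi.single m 1)))
          - (q k w.1 / q N w.1) * (Complex.I * (((w.2.1 N : ℂ) + Complex.I * w.2.2 N) * Bv j (0, Pi.single m 1))))
      (fun m => Complex.I * (((w.2.1 N : ℂ) + Complex.I * w.2.2 N) * Bv j (0, Pi.single m 1))) _ (fun m => ?_)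
    rw [ddj, ddj, ddk, ddk, hPjv, hPjv, hPkv, hPkv]
    simp only [hBv0, Pi.zero_apply, Complex.ofReal_zero, mul_zero, add_zero, zero_add]
    ring
  rw [e1, e2]
  simp only [hBvdef]
  rw [hsymm (Pi.single N 1, 0) (Pi.single k 1, 0), hsymm (Pi.single N 1, 0) (0, Pi.single k 1),
    hsymm (Pi.single N 1, 0) (Pi.single j 1, 0), hsymm (Pi.single N 1, 0) (0, Pi.single j 1),
    hsymm (Pi.single k 1, 0) (Pi.single j 1, 0), hsymm (Pi.single k 1, 0) (0, Pi.single j 1),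
    hsymm (0, Pi.single N 1) (Pi.single k 1, 0), hsymm (0, Pi.single N 1) (0, Pi.single k 1),
    hsymm (0, Pi.single N 1) (Pi.single j 1, 0), hsymm (0, Pi.single N 1) (0, Pi.single j 1),
    hsymm (0, Pi.single k 1) (Pi.single j 1, 0), hsymm (0, Pi.single k 1) (0, Pi.single j 1)]
  field_simp [hqNz]
  ring
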